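/- Let P be a general atom. Then CL2 proves P∧P→P, P∨¬P, and P→P⊓P, but CL2 does not prove P→P∧P and does not prove P⊔¬P. -/

import Mathlib

namespace CoL

/-- CL2-formulas: built from the logical atoms ⊤, ⊥, nonlogical elementary atoms
(`eatom`) and general atoms (`gatom`) by ¬, ∧, ∨, ⊓ (`cand`), ⊔ (`cor`).
`F → G` abbreviates `(¬F) ∨ G`. -/
inductive GF : Type
  | top : GF
  | bot : GF
  | eatom (n : ℕ) : GF
  | gatom (n : ℕ) : GF
  | neg (f : GF) : GF
  | and (f g : GF) : GF
  | or (f g : GF) : GF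
  | cand (f g : GF) : GF
  | cor (f g : GF) : GF
deriving DecidableEq

/-- `F → G` abbreviates `(¬F) ∨ G`. -/
def GF.imp (f g : GF) : GF := .or (.neg f) g

/-- Classical evaluation under an assignment to the elementary atoms (the clauses
for ⊓, ⊔ and general atoms are irrelevant junk: evaluation is only ever used on
elementarizations, which contain none of these). -/
def GF.eval (v : ℕ → Bool) : GF → Bool
  | .top => true
  | .bot => false
  | .eatom n => v n
  | .gatom _ => false
  | .neg f => !f.eval v
  | .and f g => f.eval v && g.eval v
  | .or f g => f.eval v || g.eval v
  | .cand _ _ => false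
  | .cor _ _ => false

/-- Classical tautology: true under every assignment. -/
def GF.Taut (f : GF) : Prop := ∀ v : ℕ → Bool, f.eval v = true

/-- The elementarization of a CL2-formula (with `pol` the polarity of the context,
`true` = positive): every surface occurrence of `G⊓H` is replaced by ⊤, every
surface occurrence of `G⊔H` by ⊥, every positive surface occurrence of a general
atom by ⊥ and every negative surface occurrence of a general atom by ⊤. -/
def GF.elem : Bool → GF → GF
  | _, .top => .top
  | _, .bot => .bot
  | _, .eatom n => .eatom n
  | pol, .gatom _ => if pol then .bot else .top
  | pol, .neg f => .neg (GF.elem (!pol) f)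
  | pol, .and f g => .and (GF.elem pol f) (GF.elem pol g)
  | pol, .or f g => .or (GF.elem pol f) (GF.elem pol g)
  | _, .cand _ _ => .top
  | _, .cor _ _ => .bot

/-- A CL2-formula is stable iff its elementarization is a classical tautology. -/
def GF.Stable (f : GF) : Prop := (GF.elem true f).Taut

/-- The elementary atom `q` occurs in the formula. -/
def GF.OccursE (q : ℕ) : GF → Prop
  | .top => False
  | .bot => False
  | .eatom n => n = q
  | .gatom _ => False
  | .neg f => f.OccursE q
  | .and f g => f.OccursE q ∨ g.OccursE q
  | .or f g => f.OccursE q ∨ g.OccursE q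
  | .cand f g => f.OccursE q ∨ g.OccursE q
  | .cor f g => f.OccursE q ∨ g.OccursE q

/-- `RuleAPrem pol F H`: `H` is the result of replacing in `F` one surface
occurrence of a subformula `G₁⊓G₂` occurring positively (resp. of `G₁⊔G₂`
occurring negatively) by `G_i`; `pol` is the polarity of the context. -/
inductive RuleAPrem : Bool → GF → GF → Prop
  | cand1 (g₁ g₂) : RuleAPrem true (.cand g₁ g₂) g₁
  | cand2 (g₁ g₂) : RuleAPrem true (.cand g₁ g₂) g₂
  | cor1 (g₁ g₂) : RuleAPrem false (.cor g₁ g₂) g₁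
  | cor2 (g₁ g₂) : RuleAPrem false (.cor g₁ g₂) g₂
  | negc {pol f h} : RuleAPrem (!pol) f h → RuleAPrem pol (.neg f) (.neg h)
  | andl {pol f h} (g) : RuleAPrem pol f h → RuleAPrem pol (.and f g) (.and h g)
  | andr {pol f h} (g) : RuleAPrem pol f h → RuleAPrem pol (.and g f) (.and g h)
  | orl {pol f h} (g) : RuleAPrem pol f h → RuleAPrem pol (.or f g) (.or h g)
  | orr {pol f h} (g) : RuleAPrem pol f h → RuleAPrem pol (.or g f) (.or g h)

/-- `RuleBPrem pol F H`: `H` is the result of replacing in `F` one surface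
occurrence of a subformula `G₁⊓G₂` occurring negatively (resp. of `G₁⊔G₂`
occurring positively) by `G_i`. -/
inductive RuleBPrem : Bool → GF → GF → Prop
  | cand1 (g₁ g₂) : RuleBPrem false (.cand g₁ g₂) g₁
  | cand2 (g₁ g₂) : RuleBPrem false (.cand g₁ g₂) g₂
  | cor1 (g₁ g₂) : RuleBPrem true (.cor g₁ g₂) g₁
  | cor2 (g₁ g₂) : RuleBPrem true (.cor g₁ g₂) g₂
  | negc {pol f h} : RuleBPrem (!pol) f h → RuleBPrem pol (.neg f) (.neg h)
  | andl {pol f h} (g) : RuleBPrem pol f h → RuleBPrem pol (.and f g) (.and h g)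
  | andr {pol f h} (g) : RuleBPrem pol f h → RuleBPrem pol (.and g f) (.and g h)
  | orl {pol f h} (g) : RuleBPrem pol f h → RuleBPrem pol (.or f g) (.or h g)
  | orr {pol f h} (g) : RuleBPrem pol f h → RuleBPrem pol (.or g f) (.or g h)

/-- `RepG P q occ pol F F'`: `F'` is the result of replacing in `F` one surface
occurrence of the general atom `P`, of polarity `occ` relative to the context
polarity `pol`, by the elementary atom `q`. -/
inductive RepG (P q : ℕ) : Bool → Bool → GF → GF → Prop
  | here (pol) : RepG P q pol pol (.gatom P) (.eatom q)
  | negc {occ pol f h} : RepG P q occ (!pol) f h → RepG P q occ pol (.neg f) (.neg h)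
  | andl {occ pol f h} (g) : RepG P q occ pol f h → RepG P q occ pol (.and f g) (.and h g)
  | andr {occ pol f h} (g) : RepG P q occ pol f h → RepG P q occ pol (.and g f) (.and g h)
  | orl {occ pol f h} (g) : RepG P q occ pol f h → RepG P q occ pol (.or f g) (.or h g)
  | orr {occ pol f h} (g) : RepG P q occ pol f h → RepG P q occ pol (.or g f) (.or g h)

/-- Provability in CL2: Rules (a) and (b) as in CL1, plus Rule (c): `F` follows
from the result `F'` of replacing in `F` one positive and one negative surface
occurrence of some general atom `P` by a nonlogical elementary atom `q` not
occurring in `F`. -/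
inductive CL2Prov : GF → Prop
  | ruleA {f} : f.Stable → (∀ h, RuleAPrem true f h → CL2Prov h) → CL2Prov f
  | ruleB {f h} : RuleBPrem true f h → CL2Prov h → CL2Prov f
  | ruleC {f g f' : GF} (P q : ℕ) : ¬ f.OccursE q →
      RepG P q true true f g → RepG P q false true g f' → CL2Prov f' → CL2Prov f


/-- Auxiliary: the formula contains a choice connective ⊓ or ⊔. -/
def GF.HasChoice : GF → Prop
  | .neg f => f.HasChoice
  | .and f g => f.HasChoice ∨ g.HasChoice
  | .or f g => f.HasChoice ∨ g.HasChoice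
  | .cand _ _ => True
  | .cor _ _ => True
  | _ => False

/-- Auxiliary: the formula contains a general atom not under ⊓/⊔. -/
def GF.HasGatom : GF → Prop
  | .gatom _ => True
  | .neg f => f.HasGatom
  | .and f g => f.HasGatom ∨ g.HasGatom
  | .or f g => f.HasGatom ∨ g.HasGatom
  | _ => False

lemma ruleAPrem_hasChoice {pol f h} (r : RuleAPrem pol f h) : f.HasChoice := by
  induction r <;> simp_all [GF.HasChoice]

lemma ruleBPrem_hasChoice {pol f h} (r : RuleBPrem pol f h) : f.HasChoice := by
  induction r <;> simp_all [GF.HasChoice]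

lemma repG_hasGatom {P q occ pol f h} (r : RepG P q occ pol f h) : f.HasGatom := by
  induction r <;> simp_all [GF.HasGatom]

lemma noA {f : GF} (hf : ¬ f.HasChoice) (hs : f.Stable) : CL2Prov f :=
  CL2Prov.ruleA hs (fun _ r => absurd (ruleAPrem_hasChoice r) hf)

/-- `¬q∨(q∧P)` is not provable. -/
lemma not_aux1 (P q : ℕ) :
    ¬ CL2Prov (GF.or (GF.neg (.eatom q)) (GF.and (.eatom q) (.gatom P))) := by
  intro h
  cases h with
  | ruleA hs _ =>
      have := hs (fun _ => true); simp [GF.elem, GF.eval] at this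
  | ruleB r _ => exact absurd (ruleBPrem_hasChoice r) (by simp [GF.HasChoice])
  | ruleC P' q' hocc r1 r2 hp =>
      cases r1 with
      | orl _ r => cases r with | negc r => cases r
      | orr _ r =>
        cases r with
        | andl _ r => cases r
        | andr _ r =>
          cases r with
          | here =>
            cases r2 with
            | orl _ r => cases r with | negc r => cases r
            | orr _ r =>
              cases r with
              | andl _ r => cases r
              | andr _ r => cases r

/-- `¬q∨(P∧q)` is not provable. -/
lemma not_aux2 (P q : ℕ) :
    ¬ CL2Prov (GF.or (GF.neg (.eatom q)) (GF.and (.gatom P) (.eatom q))) := by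
  intro h
  cases h with
  | ruleA hs _ =>
      have := hs (fun _ => true); simp [GF.elem, GF.eval] at this
  | ruleB r _ => exact absurd (ruleBPrem_hasChoice r) (by simp [GF.HasChoice])
  | ruleC P' q' hocc r1 r2 hp =>
      cases r1 with
      | orl _ r => cases r with | negc r => cases r
      | orr _ r =>
        cases r with
        | andr _ r => cases r
        | andl _ r =>
          cases r with
          | here =>
            cases r2 with
            | orl _ r => cases r with | negc r => cases r
            | orr _ r =>
              cases r with
              | andr _ r => cases r
              | andl _ r => cases r

lemma not_gatom (P : ℕ) : ¬ CL2Prov (.gatom P) := by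
  intro h
  cases h with
  | ruleA hs _ => have := hs (fun _ => true); simp [GF.elem, GF.eval] at this
  | ruleB r _ => exact absurd (ruleBPrem_hasChoice r) (by simp [GF.HasChoice])
  | ruleC P' q' hocc r1 r2 hp =>
      cases r1 with
      | here => exact absurd (repG_hasGatom r2) (by simp [GF.HasGatom])

lemma not_neg_gatom (P : ℕ) : ¬ CL2Prov (GF.neg (.gatom P)) := by
  intro h
  cases h with
  | ruleA hs _ => have := hs (fun _ => true); simp [GF.elem, GF.eval] at this
  | ruleB r _ => exact absurd (ruleBPrem_hasChoice r) (by simp [GF.HasChoice])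
  | ruleC P' q' hocc r1 r2 hp => cases r1 with | negc r => cases r

lemma prov_ngp_p (P : ℕ) : CL2Prov (GF.or (GF.neg (.gatom P)) (.gatom P)) := by
  refine CL2Prov.ruleC P 0 (by simp [GF.OccursE])
    (RepG.orr _ (RepG.here true))
    (RepG.orl _ (RepG.negc (RepG.here false))) ?_
  refine noA (by simp [GF.HasChoice]) ?_
  intro v; simp [GF.elem, GF.eval]

/-- For a general atom `P`: CL2 proves `P∧P→P`, `P∨¬P` and `P→P⊓P`, but does not
prove `P→P∧P` and does not prove `P⊔¬P`. -/
theorem cl2_example (P : ℕ) :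
    CL2Prov (GF.imp (GF.and (.gatom P) (.gatom P)) (.gatom P)) ∧
    CL2Prov (GF.or (.gatom P) (GF.neg (.gatom P))) ∧
    CL2Prov (GF.imp (.gatom P) (GF.cand (.gatom P) (.gatom P))) ∧
    ¬ CL2Prov (GF.imp (.gatom P) (GF.and (.gatom P) (.gatom P))) ∧
    ¬ CL2Prov (GF.cor (.gatom P) (GF.neg (.gatom P))) := by
  refine ⟨?_, ?_, ?_, ?_, ?_⟩
  · -- P∧P→P
    refine CL2Prov.ruleC P 0 (by simp [GF.imp, GF.OccursE])
      (RepG.orr _ (RepG.here true))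
      (RepG.orl _ (RepG.negc (RepG.andl _ (RepG.here false)))) ?_
    refine noA (by simp [GF.HasChoice]) ?_
    intro v; simp [GF.elem, GF.eval]
  · -- P∨¬P
    refine CL2Prov.ruleC P 0 (by simp [GF.OccursE])
      (RepG.orl _ (RepG.here true))
      (RepG.orr _ (RepG.negc (RepG.here false))) ?_
    refine noA (by simp [GF.HasChoice]) ?_
    intro v; simp [GF.elem, GF.eval]
  · -- P→P⊓P
    refine CL2Prov.ruleA ?_ ?_
    · intro v; simp [GF.imp, GF.Stable, GF.elem, GF.eval]
    · intro h r
      cases r with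
      | orl _ r => cases r with | negc r => cases r
      | orr _ r =>
        cases r with
        | cand1 => exact prov_ngp_p P
        | cand2 => exact prov_ngp_p P
  · -- ¬ (P→P∧P)
    intro h
    cases h with
    | ruleA hs _ => have := hs (fun _ => true); simp [GF.imp, GF.elem, GF.eval] at this
    | ruleB r _ => exact absurd (ruleBPrem_hasChoice r) (by simp [GF.imp, GF.HasChoice])
    | ruleC P' q' hocc r1 r2 hp =>
        cases r1 with
        | orl _ r => cases r with | negc r => cases r
        | orr _ r =>
          cases r with
          | andl _ r =>
            cases r with
            | here =>
              cases r2 with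
              | orl _ r =>
                cases r with
                | negc r =>
                  cases r with
                  | here => exact not_aux1 _ _ hp
              | orr _ r =>
                cases r with
                | andl _ r => cases r
                | andr _ r => cases r
          | andr _ r =>
            cases r with
            | here =>
              cases r2 with
              | orl _ r =>
                cases r with
                | negc r =>
                  cases r with
                  | here => exact not_aux2 _ _ hp
              | orr _ r =>
                cases r with
                | andl _ r => cases r
                | andr _ r => cases r
  · -- ¬ (P⊔¬P)
    intro h
    cases h with
    | ruleA hs _ => have := hs (fun _ => true); simp [GF.elem, GF.eval] at this
    | ruleC P' q' hocc r1 r2 hp => cases r1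
    | ruleB r hp =>
        cases r with
        | cor1 => exact not_gatom P hp
        | cor2 => exact not_neg_gatom P hp


end CoL
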